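/- arXiv:1807.10125 — 2 statements merged into one kernel-verified Lean document; each statement's English description precedes it below -/
import Mathlib

section
/- If u is the unique real root of 2x³ + 40x² + 400x − 1 and u′ = (64u² + 1372u + 11680)/4389, then 231(u′)³ − 400(u′)² − 512u′ − 160 = 0. -/
theorem stmt3 (u : ℝ) (hu : 2 * u ^ 3 + 40 * u ^ 2 + 400 * u - 1 = 0)
    (huniq : ∀ x : ℝ, 2 * x ^ 3 + 40 * x ^ 2 + 400 * x - 1 = 0 → x = u)
    (u' : ℝ) (hu' : u' = (64 * u ^ 2 + 1372 * u + 11680) / 4389) :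
    231 * u' ^ 3 - 400 * u' ^ 2 - 512 * u' - 160 = 0 := by
  subst hu'
  have h : (4389:ℝ)^3 ≠ 0 := by norm_num
  linear_combination ((131072 / 366003099 : ℝ) * u ^ 3 + (5808128 / 366003099 : ℝ) * u ^ 2 + (94529024 / 366003099 : ℝ) * u + (72069600 / 40667011 : ℝ)) * hu
end

section
/- Let k = θ₂²(q)/θ₃²(q) and k′ = θ₄²(q)/θ₃²(q) for 0 < q < 1. Then k² + (k′)² = 1. -/
noncomputable def theta2R (q : ℝ) : ℝ := ∑' n : ℤ, q ^ (((n : ℝ) + 1 / 2) ^ 2)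

noncomputable def theta3R (q : ℝ) : ℝ := ∑' n : ℤ, q ^ (((n : ℝ)) ^ 2)

noncomputable def theta4R (q : ℝ) : ℝ := ∑' n : ℤ, (-1 : ℝ) ^ n * q ^ (((n : ℝ)) ^ 2)

open Real

/-- Summability over ℕ of shifted Gaussian-type terms. -/
lemma thetaAux.sumNat {q : ℝ} (hq0 : 0 < q) (hq1 : q < 1) (c : ℝ) :
    Summable (fun n : ℕ => q ^ (((n : ℝ) + c) ^ 2)) := by
  have hsum : Summable (fun n : ℕ => q ^ (-(c ^ 2 + 1)) * q ^ n) :=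
    (summable_geometric_of_lt_one hq0.le hq1).mul_left _
  refine Summable.of_nonneg_of_le (fun n => (Real.rpow_pos_of_pos hq0 _).le) (fun n => ?_) hsum
  have h1 : (n : ℝ) - (c ^ 2 + 1) ≤ ((n : ℝ) + c) ^ 2 := by
    nlinarith [sq_nonneg ((n : ℝ) + c - 1 / 2), sq_nonneg (c + 1 / 2)]
  calc q ^ (((n : ℝ) + c) ^ 2) ≤ q ^ ((n : ℝ) - (c ^ 2 + 1)) :=
        Real.rpow_le_rpow_of_exponent_ge hq0 hq1.le h1
    _ = q ^ (-(c ^ 2 + 1)) * q ^ n := by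
        rw [sub_eq_add_neg, Real.rpow_add hq0, mul_comm, Real.rpow_natCast]

/-- Summability over ℤ. -/
lemma thetaAux.sumInt {q : ℝ} (hq0 : 0 < q) (hq1 : q < 1) (c : ℝ) :
    Summable (fun n : ℤ => q ^ (((n : ℝ) + c) ^ 2)) := by
  refine Summable.of_nat_of_neg ((thetaAux.sumNat hq0 hq1 c).congr fun n => ?_)
    ((thetaAux.sumNat hq0 hq1 (-c)).congr fun n => ?_)
  · push_cast; ring_nf
  · push_cast
    congr 1
    ring

/-- Absolute summability. -/
lemma thetaAux.sumIntAbs {q : ℝ} (hq0 : 0 < q) (hq1 : q < 1) (c : ℝ) :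
    Summable (fun n : ℤ => |q ^ (((n : ℝ) + c) ^ 2)|) :=
  (thetaAux.sumInt hq0 hq1 c).congr fun n =>
    (abs_of_nonneg (Real.rpow_nonneg hq0.le _)).symm

def thetaAux.E : Bool × ℤ × ℤ ≃ ℤ × ℤ where
  toFun x := (x.2.1 + x.2.2 + (if x.1 then 1 else 0), x.2.1 - x.2.2)
  invFun p := if (p.1 + p.2) % 2 = 0 then (false, ((p.1 + p.2) / 2, (p.1 - p.2) / 2))
              else (true, ((p.1 + p.2 - 1) / 2, (p.1 - p.2 - 1) / 2))
  left_inv := by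
    rintro ⟨b, a, c⟩
    cases b <;> dsimp only <;> split_ifs with h <;> simp_all [Prod.mk.injEq] <;> omega
  right_inv := by
    rintro ⟨m, n⟩
    dsimp only
    split_ifs with h <;> simp_all [Prod.mk.injEq] <;> omega

/-- The key splitting identity. -/
lemma thetaAux.split (f g : ℤ → ℝ) (hf : Summable fun n => |f n|)
    (hg : Summable fun n => |g n|) :
    (∑' m, f m) * (∑' n, g n)
      = (∑' p : ℤ × ℤ, f (p.1 + p.2) * g (p.1 - p.2))
        + ∑' p : ℤ × ℤ, f (p.1 + p.2 + 1) * g (p.1 - p.2) := by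
  have hf' : Summable f := summable_abs_iff.mp hf
  have hg' : Summable g := summable_abs_iff.mp hg
  have hfg : Summable fun p : ℤ × ℤ => f p.1 * g p.2 :=
    summable_mul_of_summable_norm (by simpa [Real.norm_eq_abs] using hf)
      (by simpa [Real.norm_eq_abs] using hg)
  rw [Summable.tsum_mul_tsum hf' hg' hfg]
  rw [← thetaAux.E.tsum_eq (fun p : ℤ × ℤ => f p.1 * g p.2)]
  have hsum : Summable fun x : Bool × ℤ × ℤ => f (thetaAux.E x).1 * g (thetaAux.E x).2 :=
    thetaAux.E.summable_iff.mpr hfg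
  rw [Summable.tsum_prod' hsum (fun b => hsum.comp_injective (fun c c' h => by simpa using h)),
    tsum_bool]
  congr 1 <;> apply tsum_congr <;> intro p <;> simp [thetaAux.E]

lemma thetaAux.merge {q : ℝ} (hq0 : 0 < q) {x y z w : ℝ} (h : x + y = 2 * z + 2 * w) :
    q ^ x * q ^ y = (q ^ 2) ^ z * (q ^ 2) ^ w := by
  have h2 : ∀ u : ℝ, (q ^ 2 : ℝ) ^ u = q ^ (2 * u) := by
    intro u
    rw [← Real.rpow_natCast q 2, ← Real.rpow_mul hq0.le]
    norm_num
  rw [h2, h2, ← Real.rpow_add hq0, ← Real.rpow_add hq0, h]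

set_option maxHeartbeats 1000000 in
lemma thetaAux.fold {s : ℝ} (hs0 : 0 < s) (hs1 : s < 1) (c d : ℝ) :
    (∑' p : ℤ × ℤ, s ^ (((p.1 : ℝ) + c) ^ 2) * s ^ (((p.2 : ℝ) + d) ^ 2))
      = (∑' n : ℤ, s ^ (((n : ℝ) + c) ^ 2)) * ∑' n : ℤ, s ^ (((n : ℝ) + d) ^ 2) := by
  have h1 : Summable fun n : ℤ => ‖s ^ (((n : ℝ) + c) ^ 2)‖ := by
    simpa [Real.norm_eq_abs] using thetaAux.sumIntAbs hs0 hs1 c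
  have h2 : Summable fun n : ℤ => ‖s ^ (((n : ℝ) + d) ^ 2)‖ := by
    simpa [Real.norm_eq_abs] using thetaAux.sumIntAbs hs0 hs1 d
  exact (Summable.tsum_mul_tsum (thetaAux.sumInt hs0 hs1 c) (thetaAux.sumInt hs0 hs1 d)
    (summable_mul_of_summable_norm h1 h2)).symm

section identities

variable {q : ℝ} (hq0 : 0 < q) (hq1 : q < 1)

include hq0 hq1 in
lemma thetaAux.idA : theta3R q ^ 2 = theta3R (q ^ 2) ^ 2 + theta2R (q ^ 2) ^ 2 := by
  have hs0 : (0 : ℝ) < q ^ 2 := by positivity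
  have hs1 : q ^ 2 < 1 := by nlinarith
  have habs := thetaAux.sumIntAbs hq0 hq1 0
  simp only [add_zero] at habs
  unfold theta3R theta2R
  rw [sq, thetaAux.split _ _ habs habs]
  congr 1
  · rw [show (∑' p : ℤ × ℤ, q ^ ((((p.1 + p.2 : ℤ)) : ℝ) ^ 2) * q ^ ((((p.1 - p.2 : ℤ)) : ℝ) ^ 2))
        = ∑' p : ℤ × ℤ, (q ^ 2) ^ (((p.1 : ℝ) + 0) ^ 2) * (q ^ 2) ^ (((p.2 : ℝ) + 0) ^ 2) from
      tsum_congr fun p => thetaAux.merge hq0 (by push_cast; ring)]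
    rw [thetaAux.fold hs0 hs1 0 0]
    simp [sq]
  · rw [show (∑' p : ℤ × ℤ, q ^ ((((p.1 + p.2 + 1 : ℤ)) : ℝ) ^ 2) * q ^ ((((p.1 - p.2 : ℤ)) : ℝ) ^ 2))
        = ∑' p : ℤ × ℤ, (q ^ 2) ^ (((p.1 : ℝ) + 1 / 2) ^ 2) * (q ^ 2) ^ (((p.2 : ℝ) + 1 / 2) ^ 2) from
      tsum_congr fun p => thetaAux.merge hq0 (by push_cast; ring)]
    rw [thetaAux.fold hs0 hs1 (1 / 2) (1 / 2)]
    exact (sq _).symm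

include hq0 hq1 in
lemma thetaAux.idB : theta4R q ^ 2 = theta3R (q ^ 2) ^ 2 - theta2R (q ^ 2) ^ 2 := by
  have hs0 : (0 : ℝ) < q ^ 2 := by positivity
  have hs1 : q ^ 2 < 1 := by nlinarith
  have habs : Summable fun n : ℤ => |(-1 : ℝ) ^ n * q ^ ((n : ℝ) ^ 2)| := by
    refine (thetaAux.sumInt hq0 hq1 0).congr fun n => ?_
    have h1 : |(-1 : ℝ) ^ n| = 1 := by
      rcases Int.even_or_odd n with h | h
      · rw [h.neg_one_zpow, abs_one]
      · rw [h.neg_one_zpow, abs_neg, abs_one]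
    rw [abs_mul, h1, one_mul, abs_of_nonneg (Real.rpow_nonneg hq0.le _), add_zero]
  unfold theta4R theta2R theta3R
  rw [sq, thetaAux.split _ _ habs habs]
  have hne : (-1 : ℝ) ≠ 0 := by norm_num
  congr 1
  · rw [show (∑' p : ℤ × ℤ, ((-1 : ℝ) ^ (p.1 + p.2) * q ^ ((((p.1 + p.2 : ℤ)) : ℝ) ^ 2)) *
        ((-1 : ℝ) ^ (p.1 - p.2) * q ^ ((((p.1 - p.2 : ℤ)) : ℝ) ^ 2)))
        = ∑' p : ℤ × ℤ, (q ^ 2) ^ (((p.1 : ℝ) + 0) ^ 2) * (q ^ 2) ^ (((p.2 : ℝ) + 0) ^ 2) from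
      tsum_congr fun p => by
        have hsgn : (-1 : ℝ) ^ (p.1 + p.2) * (-1 : ℝ) ^ (p.1 - p.2) = 1 := by
          rw [← zpow_add₀ hne]
          exact Even.neg_one_zpow ⟨p.1, by ring⟩
        calc ((-1 : ℝ) ^ (p.1 + p.2) * q ^ ((((p.1 + p.2 : ℤ)) : ℝ) ^ 2)) *
            ((-1 : ℝ) ^ (p.1 - p.2) * q ^ ((((p.1 - p.2 : ℤ)) : ℝ) ^ 2))
            = ((-1 : ℝ) ^ (p.1 + p.2) * (-1 : ℝ) ^ (p.1 - p.2)) *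
              (q ^ ((((p.1 + p.2 : ℤ)) : ℝ) ^ 2) * q ^ ((((p.1 - p.2 : ℤ)) : ℝ) ^ 2)) := by ring
          _ = q ^ ((((p.1 + p.2 : ℤ)) : ℝ) ^ 2) * q ^ ((((p.1 - p.2 : ℤ)) : ℝ) ^ 2) := by
              rw [hsgn, one_mul]
          _ = _ := thetaAux.merge hq0 (by push_cast; ring)]
    rw [thetaAux.fold hs0 hs1 0 0]
    simp [sq]
  · rw [show (∑' p : ℤ × ℤ, ((-1 : ℝ) ^ (p.1 + p.2 + 1) * q ^ ((((p.1 + p.2 + 1 : ℤ)) : ℝ) ^ 2)) *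
        ((-1 : ℝ) ^ (p.1 - p.2) * q ^ ((((p.1 - p.2 : ℤ)) : ℝ) ^ 2)))
        = ∑' p : ℤ × ℤ, -((q ^ 2) ^ (((p.1 : ℝ) + 1 / 2) ^ 2) * (q ^ 2) ^ (((p.2 : ℝ) + 1 / 2) ^ 2)) from
      tsum_congr fun p => by
        have hsgn : (-1 : ℝ) ^ (p.1 + p.2 + 1) * (-1 : ℝ) ^ (p.1 - p.2) = -1 := by
          rw [← zpow_add₀ hne]
          exact Odd.neg_one_zpow ⟨p.1, by ring⟩
        calc ((-1 : ℝ) ^ (p.1 + p.2 + 1) * q ^ ((((p.1 + p.2 + 1 : ℤ)) : ℝ) ^ 2)) *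
            ((-1 : ℝ) ^ (p.1 - p.2) * q ^ ((((p.1 - p.2 : ℤ)) : ℝ) ^ 2))
            = ((-1 : ℝ) ^ (p.1 + p.2 + 1) * (-1 : ℝ) ^ (p.1 - p.2)) *
              (q ^ ((((p.1 + p.2 + 1 : ℤ)) : ℝ) ^ 2) * q ^ ((((p.1 - p.2 : ℤ)) : ℝ) ^ 2)) := by ring
          _ = -(q ^ ((((p.1 + p.2 + 1 : ℤ)) : ℝ) ^ 2) * q ^ ((((p.1 - p.2 : ℤ)) : ℝ) ^ 2)) := by
              rw [hsgn]; ring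
          _ = _ := by rw [thetaAux.merge hq0 (x := (((p.1 + p.2 + 1 : ℤ)) : ℝ) ^ 2)
                (y := (((p.1 - p.2 : ℤ)) : ℝ) ^ 2) (z := ((p.1 : ℝ) + 1 / 2) ^ 2)
                (w := ((p.2 : ℝ) + 1 / 2) ^ 2) (by push_cast; ring)]]
    rw [tsum_neg, thetaAux.fold hs0 hs1 (1 / 2) (1 / 2)]
    ring

include hq0 hq1 in
lemma thetaAux.idC : theta2R q ^ 2 = 2 * theta2R (q ^ 2) * theta3R (q ^ 2) := by
  have hs0 : (0 : ℝ) < q ^ 2 := by positivity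
  have hs1 : q ^ 2 < 1 := by nlinarith
  have habs := thetaAux.sumIntAbs hq0 hq1 (1 / 2)
  unfold theta2R theta3R
  rw [sq, thetaAux.split _ _ habs habs]
  have shift : (∑' n : ℤ, (q ^ 2) ^ (((n : ℝ) + 1) ^ 2)) = ∑' n : ℤ, (q ^ 2) ^ ((n : ℝ) ^ 2) := by
    rw [← (Equiv.addRight (1 : ℤ)).tsum_eq (fun n : ℤ => (q ^ 2) ^ ((n : ℝ) ^ 2))]
    refine tsum_congr fun n => ?_
    simp only [Equiv.coe_addRight]
    congr 1
    push_cast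
    ring
  rw [show (∑' p : ℤ × ℤ, q ^ ((((p.1 + p.2 : ℤ)) : ℝ) + 1 / 2) ^ 2 *
        q ^ ((((p.1 - p.2 : ℤ)) : ℝ) + 1 / 2) ^ 2)
      = ∑' p : ℤ × ℤ, (q ^ 2) ^ (((p.1 : ℝ) + 1 / 2) ^ 2) * (q ^ 2) ^ (((p.2 : ℝ) + 0) ^ 2) from
    tsum_congr fun p => thetaAux.merge hq0 (by push_cast; ring)]
  rw [show (∑' p : ℤ × ℤ, q ^ ((((p.1 + p.2 + 1 : ℤ)) : ℝ) + 1 / 2) ^ 2 *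
        q ^ ((((p.1 - p.2 : ℤ)) : ℝ) + 1 / 2) ^ 2)
      = ∑' p : ℤ × ℤ, (q ^ 2) ^ (((p.1 : ℝ) + 1) ^ 2) * (q ^ 2) ^ (((p.2 : ℝ) + 1 / 2) ^ 2) from
    tsum_congr fun p => thetaAux.merge hq0 (by push_cast; ring)]
  rw [thetaAux.fold hs0 hs1 (1 / 2) 0, thetaAux.fold hs0 hs1 1 (1 / 2)]
  simp only [add_zero]
  rw [shift]
  ring

end identities

theorem stmt10 (q : ℝ) (hq0 : 0 < q) (hq1 : q < 1) :
    (theta2R q ^ 2 / theta3R q ^ 2) ^ 2 + (theta4R q ^ 2 / theta3R q ^ 2) ^ 2 = 1 := by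
  have hpos : 0 < theta3R q := by
    refine Summable.tsum_pos (thetaAux.sumInt hq0 hq1 0 |>.congr fun n => by rw [add_zero])
      (fun n => Real.rpow_nonneg hq0.le _) 0 (Real.rpow_pos_of_pos hq0 _)
  have hA := thetaAux.idA hq0 hq1
  have hB := thetaAux.idB hq0 hq1
  have hC := thetaAux.idC hq0 hq1
  have hne : theta3R (q ^ 2) ^ 2 + theta2R (q ^ 2) ^ 2 ≠ 0 := by
    rw [← hA]; positivity
  rw [hA, hB, hC]
  field_simp
  ring
end
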